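/- arXiv:0905.4209 — 2 statements merged into one kernel-verified Lean document; each statement's English description precedes it below -/
import Mathlib

section
/- For every n ≥ 2, the first cohomology group H^1(Σ_n, ℤ_sgn) of the symmetric group Σ_n with coefficients in the sign lattice is cyclic of order 2. -/
open scoped TensorProduct

/-- The sign representation of the symmetric group `Σ_n` on `ℤ`:
`σ` acts by multiplication by `sgn σ`. -/
noncomputable def signRep (n : ℕ) : Representation ℤ (Equiv.Perm (Fin n)) ℤ where
  toFun g := ((Equiv.Perm.sign g : ℤˣ) : ℤ) • LinearMap.id
  map_one' := by
    simp [Module.End.one_eq_id]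
  map_mul' g h := by
    ext
    simp [mul_smul, map_mul, mul_comm]

namespace SignH1

open groupCohomology Equiv.Perm

variable {n : ℕ}

lemma signRep_apply (g : Equiv.Perm (Fin n)) (x : ℤ) :
    (Rep.of (signRep n)).ρ g x = ((Equiv.Perm.sign g : ℤˣ) : ℤ) * x := rfl

/-- The value of a cocycle, seen in `ℤ`. -/
noncomputable def val (f : cocycles₁ (Rep.of (signRep n))) (g : Equiv.Perm (Fin n)) : ℤ := f g

lemma cocycle_mul (f : cocycles₁ (Rep.of (signRep n))) (g h : Equiv.Perm (Fin n)) :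
    val f (g * h) = ((Equiv.Perm.sign g : ℤˣ) : ℤ) * val f h + val f g :=
  (mem_cocycles₁_iff (f.1 : Equiv.Perm (Fin n) → ℤ)).1 f.2 g h

lemma val_one (f : cocycles₁ (Rep.of (signRep n))) : val f 1 = 0 :=
  cocycles₁_map_one f

/-- A cocycle vanishes on even permutations. -/
lemma cocycle_even (f : cocycles₁ (Rep.of (signRep n)))
    {g : Equiv.Perm (Fin n)} (hg : Equiv.Perm.sign g = 1) : val f g = 0 := by
  have hmem : g ∈ Subgroup.closure {σ : Equiv.Perm (Fin n) | σ.IsThreeCycle} := by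
    rw [Equiv.Perm.closure_three_cycles_eq_alternating]
    exact Equiv.Perm.mem_alternatingGroup.2 hg
  clear hg
  induction hmem using Subgroup.closure_induction with
  | mem σ hσ =>
      have hs : Equiv.Perm.sign σ = 1 := hσ.sign
      have h3 : σ * (σ * σ) = 1 := by
        have h := pow_orderOf_eq_one σ
        rw [hσ.orderOf] at h
        simpa [pow_succ, mul_assoc] using h
      have h2 := cocycle_mul f σ σ
      rw [hs] at h2
      have h1 := cocycle_mul f σ (σ * σ)
      rw [h3, hs, h2, val_one] at h1
      simp only [Units.val_one, one_mul] at h1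
      linarith
  | one => exact val_one f
  | mul x y hx hy ihx ihy =>
      have hsx : Equiv.Perm.sign x = 1 := by
        rw [Equiv.Perm.closure_three_cycles_eq_alternating] at hx
        exact Equiv.Perm.mem_alternatingGroup.1 hx
      have h := cocycle_mul f x y
      rw [hsx, ihx, ihy] at h
      simpa using h
  | inv x hx ihx =>
      have hsx : Equiv.Perm.sign x⁻¹ = 1 := by
        rw [Equiv.Perm.closure_three_cycles_eq_alternating] at hx
        simpa using Equiv.Perm.mem_alternatingGroup.1 hx
      have h := cocycle_mul f x⁻¹ x
      rw [hsx, inv_mul_cancel, ihx, val_one] at h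
      simpa using h.symm

/-- The standard transposition `(0 1)`. -/
def tau (hn : 2 ≤ n) : Equiv.Perm (Fin n) :=
  Equiv.swap ⟨0, by omega⟩ ⟨1, by omega⟩

lemma sign_tau (hn : 2 ≤ n) : Equiv.Perm.sign (tau hn) = -1 := by
  apply Equiv.Perm.sign_swap
  simp [Fin.ext_iff]

lemma tau_mul_self (hn : 2 ≤ n) : tau hn * tau hn = 1 :=
  Equiv.swap_mul_self _ _

/-- A cocycle takes the same value at every odd permutation as at `tau`. -/
lemma cocycle_odd (hn : 2 ≤ n) (f : cocycles₁ (Rep.of (signRep n)))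
    {g : Equiv.Perm (Fin n)} (hg : Equiv.Perm.sign g = -1) :
    val f g = val f (tau hn) := by
  have h1 : Equiv.Perm.sign (tau hn * g) = 1 := by
    rw [map_mul, sign_tau hn, hg]; decide
  have h0 : val f (tau hn * g) = 0 := cocycle_even f h1
  have h := cocycle_mul f (tau hn) (tau hn * g)
  rw [← mul_assoc, tau_mul_self hn, one_mul, h0, mul_zero, zero_add] at h
  exact h

/-- The standard cocycle with value `a` at odd permutations. -/
def std (n : ℕ) (a : ℤ) : Equiv.Perm (Fin n) → ℤ :=
  fun g => if Equiv.Perm.sign g = 1 then 0 else a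

lemma std_mem (a : ℤ) : std n a ∈ cocycles₁ (Rep.of (signRep n)) := by
  rw [mem_cocycles₁_iff]
  intro g h
  show std n a (g * h) = ((Equiv.Perm.sign g : ℤˣ) : ℤ) * std n a h + std n a g
  rcases Int.units_eq_one_or (Equiv.Perm.sign g) with hg | hg <;>
    rcases Int.units_eq_one_or (Equiv.Perm.sign h) with hh | hh <;>
      simp [std, map_mul, hg, hh]

/-- Evaluation at `tau` is a linear equivalence from the cocycles to `ℤ`. -/
noncomputable def ev (hn : 2 ≤ n) : cocycles₁ (Rep.of (signRep n)) ≃ₗ[ℤ] ℤ where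
  toFun f := val f (tau hn)
  map_add' f g := rfl
  map_smul' r f := rfl
  invFun a := ⟨std n a, std_mem a⟩
  left_inv f := by
    apply Subtype.ext
    funext g
    show std n (val f (tau hn)) g = val f g
    rcases Int.units_eq_one_or (Equiv.Perm.sign g) with hg | hg
    · rw [cocycle_even f hg]
      simp [std, hg]
    · rw [cocycle_odd hn f hg]
      have hne : ¬ (Equiv.Perm.sign g = 1) := by rw [hg]; decide
      simp [std, hne]
  right_inv a := by
    show std n a (tau hn) = a
    have hne : ¬ (Equiv.Perm.sign (tau hn) = 1) := by rw [sign_tau hn]; decide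
    simp [std, hne]

lemma coboundary_char (f : cocycles₁ (Rep.of (signRep n)))
    (hf : f ∈ LinearMap.range (shortComplexH1 (Rep.of (signRep n))).moduleCatToCycles) :
    ∃ y : ℤ, ∀ g, val f g = ((Equiv.Perm.sign g : ℤˣ) : ℤ) * y - y := by
  obtain ⟨y, rfl⟩ := hf
  exact ⟨y, fun g => rfl⟩

lemma map_coboundaries (hn : 2 ≤ n) :
    Submodule.map ((ev hn : cocycles₁ (Rep.of (signRep n)) ≃ₗ[ℤ] ℤ) :
        cocycles₁ (Rep.of (signRep n)) →ₗ[ℤ] ℤ)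
      (LinearMap.range (shortComplexH1 (Rep.of (signRep n))).moduleCatToCycles) = Ideal.span {(2 : ℤ)} := by
  apply le_antisymm
  · rintro x ⟨f, hf, rfl⟩
    obtain ⟨y, hy⟩ := coboundary_char f hf
    have h := hy (tau hn)
    rw [sign_tau hn] at h
    simp only [Units.val_neg, Units.val_one, neg_mul, one_mul] at h
    show val f (tau hn) ∈ Ideal.span {(2 : ℤ)}
    rw [Ideal.mem_span_singleton]
    exact ⟨-y, by linarith⟩
  · rw [Ideal.span_le]
    intro x hx
    rw [Set.mem_singleton_iff] at hx
    subst hx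
    obtain ⟨F, hF⟩ : ∃ F : LinearMap.range (shortComplexH1 (Rep.of (signRep n))).moduleCatToCycles,
        val F.1 (tau hn) = ((Equiv.Perm.sign (tau hn) : ℤˣ) : ℤ) * (-1 : ℤ) - (-1 : ℤ) :=
      ⟨⟨(shortComplexH1 (Rep.of (signRep n))).moduleCatToCycles (-1 : ℤ), (-1 : ℤ), rfl⟩, rfl⟩
    refine Submodule.mem_map.2 ⟨F.1, F.2, ?_⟩
    show val F.1 (tau hn) = (2 : ℤ)
    rw [hF, sign_tau hn]
    norm_num

attribute [local instance 10000] ModuleCat.isModule ModuleCat.isAddCommGroup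

/-- An isomorphism in `ModuleCat ℤ` gives an additive equivalence. -/
noncomputable def modIsoAddEquiv {M N : ModuleCat ℤ} (i : M ≅ N) : M ≃+ N where
  toFun := i.hom.hom
  invFun := i.inv.hom
  left_inv x := by simp
  right_inv x := by simp
  map_add' x y := map_add i.hom.hom x y

end SignH1

/-- For `n ≥ 2`, `H^1(Σ_n, ℤ_sgn)` is cyclic of order `2`. -/
theorem H1_signRep_addEquiv_zmod_two (n : ℕ) (hn : 2 ≤ n) :
    Nonempty ((groupCohomology (Rep.of (signRep n)) 1) ≃+ ZMod 2) := by
  refine ⟨(SignH1.modIsoAddEquiv (groupCohomology.H1Iso (Rep.of (signRep n)))).trans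
    (((Submodule.Quotient.equiv (LinearMap.range (groupCohomology.shortComplexH1 (Rep.of (signRep n))).moduleCatToCycles)
        (Ideal.span {(2 : ℤ)}) (SignH1.ev hn)
        (SignH1.map_coboundaries hn)).toAddEquiv).trans
      (Int.quotientSpanNatEquivZMod 2).toAddEquiv)⟩
end

section
/- For n ≥ 2, the second cohomology group H^2(Σ_n, ℤ_sgn) of the symmetric group Σ_n with coefficients in the sign lattice is trivial except when n ∈ {3,4}; in the exceptional cases n = 3 and n = 4 it is cyclic of order 3. -/
open scoped TensorProduct

namespace SignH2
open Equiv Equiv.Perm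

variable {n : ℕ}

abbrev G (n : ℕ) := Equiv.Perm (Fin n)

def ε (g : G n) : ℤ := (Equiv.Perm.sign g : ℤ)

lemma ε_mul (g h : G n) : ε (g * h) = ε g * ε h := by simp [ε]

lemma ε_one : ε (1 : G n) = 1 := by simp [ε]

lemma ε_sq (g : G n) : ε g * ε g = 1 := by
  have := Int.units_mul_self (Equiv.Perm.sign g)
  simpa [ε] using congrArg (Units.val) this

lemma ε_cases (g : G n) : ε g = 1 ∨ ε g = -1 := by
  rcases Int.units_eq_one_or (Equiv.Perm.sign g) with h | h <;>
    simp [ε, h]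

lemma ε_inv (g : G n) : ε g⁻¹ = ε g := by simp [ε]

lemma rho_apply (g : G n) (x : ℤ) : ((Rep.of (signRep n)).ρ g) x = ε g * x := by
  simp [signRep, ε, Rep.of]

section cocycle

variable (f : G n × G n → ℤ)
  (hc : ∀ g h j : G n, ε g * f (h, j) - f (g * h, j) + f (g, h * j) - f (g, h) = 0)

/-- sum over second variable -/
def Fs (g : G n) : ℤ := ∑ j : G n, f (g, j)

include hc in
lemma sumrel (g h : G n) :
    (Fintype.card (G n) : ℤ) * f (g, h) = ε g * Fs f h - Fs f (g * h) + Fs f g := by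
  have h0 : ∑ j : G n, (ε g * f (h, j) - f (g * h, j) + f (g, h * j) - f (g, h)) = 0 :=
    Finset.sum_eq_zero fun j _ => hc g h j
  have e1 : ∑ j : G n, f (g, h * j) = Fs f g :=
    Fintype.sum_equiv (Equiv.mulLeft h) _ _ fun j => rfl
  simp only [Finset.sum_sub_distrib, Finset.sum_add_distrib, ← Finset.mul_sum,
    Finset.sum_const, Finset.card_univ, nsmul_eq_mul, e1] at h0
  unfold Fs at h0 ⊢
  linarith


/-- averaged cochain -/
noncomputable def ψ (g : G n) : ℚ := (Fs f g : ℚ) / (Fintype.card (G n) : ℚ)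

include hc in
lemma psirel (g h : G n) : ψ f (g * h) = ε g * ψ f h + ψ f g - f (g, h) := by
  have hN : (Fintype.card (G n) : ℚ) ≠ 0 := by
    exact_mod_cast Nat.cast_ne_zero.mpr Fintype.card_ne_zero
  have := sumrel f hc g h
  have this' : ((Fintype.card (G n)) : ℚ) * (f (g, h) : ℚ)
      = (ε g : ℚ) * (Fs f h : ℚ) - (Fs f (g * h) : ℚ) + (Fs f g : ℚ) := by exact_mod_cast this
  unfold ψ
  field_simp
  linarith [this']

include hc in
lemma psi_one : ψ f 1 = f (1, 1) := by
  have := psirel f hc 1 1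
  rw [one_mul, ε_one] at this
  push_cast at this
  linarith

end cocycle

/-- the subgroup ℤ ⊆ ℚ -/
def S : AddSubgroup ℚ := AddSubgroup.zmultiples (1 : ℚ)

lemma intCast_mem_S (m : ℤ) : (m : ℚ) ∈ S := ⟨m, by simp⟩

lemma mem_S_iff (r : ℚ) : r ∈ S ↔ ∃ m : ℤ, (m : ℚ) = r := by
  constructor
  · rintro ⟨m, rfl⟩; exact ⟨m, by simp⟩
  · rintro ⟨m, rfl⟩; exact intCast_mem_S m

lemma int_mul_mem_S {r : ℚ} (z : ℤ) (hr : r ∈ S) : z * r ∈ S := by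
  simpa [zsmul_eq_mul] using AddSubgroup.zsmul_mem S hr z

section cong

variable (f : G n × G n → ℤ)
  (hc : ∀ g h j : G n, ε g * f (h, j) - f (g * h, j) + f (g, h * j) - f (g, h) = 0)

include hc

lemma psi_mul_mem (g h : G n) : ψ f (g * h) - (ε g * ψ f h + ψ f g) ∈ S := by
  rw [psirel f hc g h]
  simpa using S.neg_mem (intCast_mem_S (f (g, h)))

lemma psi_one_mem : ψ f 1 ∈ S := by rw [psi_one f hc]; exact intCast_mem_S _

lemma psi_inv_mem (g : G n) : ψ f g⁻¹ + ε g * ψ f g ∈ S := by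
  have h1 := psi_mul_mem f hc g g⁻¹
  rw [mul_inv_cancel] at h1
  have h2 : ε g * (ψ f 1 - (ε g * ψ f g⁻¹ + ψ f g)) ∈ S := int_mul_mem_S _ h1
  have h3 : ε g * ψ f 1 ∈ S := int_mul_mem_S _ (psi_one_mem f hc)
  have h4 := S.sub_mem h3 h2
  have key : (ε g : ℚ) * ψ f 1 - ε g * (ψ f 1 - (ε g * ψ f g⁻¹ + ψ f g))
      = ψ f g⁻¹ + ε g * ψ f g := by
    have hs : (ε g : ℚ) * ε g = 1 := by exact_mod_cast congrArg (Int.cast : ℤ → ℚ) (ε_sq g)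
    linear_combination (ψ f g⁻¹) * hs
  rwa [key] at h4

lemma psi_conj_mem (g x : G n) (hx : ε x = 1) :
    ψ f (g * x * g⁻¹) - ε g * ψ f x ∈ S := by
  have h1 := psi_mul_mem f hc g (x * g⁻¹)
  have h2 := psi_mul_mem f hc x g⁻¹
  have h3 := psi_inv_mem f hc g
  -- ψ (g*(x*g⁻¹)) ≡ εg ψ(x g⁻¹) + ψ g ; ψ(x g⁻¹) ≡ ψ g⁻¹ + ψ x ; ψ g⁻¹ ≡ - εg ψ g
  have h2' : (ε g : ℚ) * (ψ f (x * g⁻¹) - (ε x * ψ f g⁻¹ + ψ f x)) ∈ S :=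
    int_mul_mem_S _ h2
  have h3' : (ε g : ℚ) * (ψ f g⁻¹ + ε g * ψ f g) ∈ S := int_mul_mem_S _ h3
  have hs : (ε g : ℚ) * ε g = 1 := by exact_mod_cast congrArg (Int.cast : ℤ → ℚ) (ε_sq g)
  have hx' : (ε x : ℚ) = 1 := by exact_mod_cast congrArg (Int.cast : ℤ → ℚ) hx
  have hcomb := S.add_mem (S.add_mem h1 h2') h3'
  have key : ψ f (g * (x * g⁻¹)) - (ε g * ψ f (x * g⁻¹) + ψ f g)
      + (ε g : ℚ) * (ψ f (x * g⁻¹) - (ε x * ψ f g⁻¹ + ψ f x))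
      + (ε g : ℚ) * (ψ f g⁻¹ + ε g * ψ f g)
      = ψ f (g * x * g⁻¹) - ε g * ψ f x := by
    rw [hx', mul_assoc]
    linear_combination (ψ f g) * hs
  rwa [key] at hcomb

lemma psi_even_mul_mem (a b : G n) (ha : ε a = 1) :
    ψ f (a * b) - (ψ f a + ψ f b) ∈ S := by
  have h1 := psi_mul_mem f hc a b
  have ha' : (ε a : ℚ) = 1 := by exact_mod_cast congrArg (Int.cast : ℤ → ℚ) ha
  rw [ha'] at h1
  simpa [one_mul, add_comm] using h1

end cong


section threecycle

variable (h3 : 3 ≤ n)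

/-- the 3-cycle (0 1 2) -/
def cyc : G n :=
  Equiv.swap ⟨1, by omega⟩ ⟨0, by omega⟩ * Equiv.swap ⟨1, by omega⟩ ⟨2, by omega⟩

lemma cyc_isThreeCycle : Equiv.Perm.IsThreeCycle (cyc h3) :=
  Equiv.Perm.isThreeCycle_swap_mul_swap_same (by simp) (by simp) (by simp)

lemma ε_cyc : ε (cyc h3) = 1 := by
  have := (cyc_isThreeCycle h3).sign
  simp [ε, this]

lemma cyc_cube : cyc h3 * cyc h3 * cyc h3 = 1 := by
  have h := pow_orderOf_eq_one (cyc h3)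
  rw [(cyc_isThreeCycle h3).orderOf] at h
  rw [pow_succ, pow_two] at h
  exact h

variable (f : G n × G n → ℤ)
  (hc : ∀ g h j : G n, ε g * f (h, j) - f (g * h, j) + f (g, h * j) - f (g, h) = 0)

include hc

lemma three_psi_cyc :
    3 * ψ f (cyc h3) = f (1, 1) + f (cyc h3, cyc h3) + f (cyc h3 * cyc h3, cyc h3) := by
  set c := cyc h3 with hcdef
  have h1 : ψ f (c * c) = ε c * ψ f c + ψ f c - f (c, c) := psirel f hc c c
  have h2 : ψ f (c * c * c) = ε (c * c) * ψ f c + ψ f (c * c) - f (c * c, c) :=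
    psirel f hc (c * c) c
  rw [cyc_cube h3] at h2
  rw [psi_one f hc] at h2
  have he : ε c = 1 := ε_cyc h3
  have he2 : ε (c * c) = 1 := by rw [ε_mul, he]; ring
  rw [he] at h1; rw [he2] at h2
  push_cast at h1 h2 ⊢
  linarith

lemma psi_even_multiple (a : G n) (ha : ε a = 1) :
    ∃ j : ℤ, ψ f a - (j : ℚ) * ψ f (cyc h3) ∈ S := by
  have hmem : a ∈ Subgroup.closure { σ : G n | Equiv.Perm.IsThreeCycle σ } := by
    rw [Equiv.Perm.closure_three_cycles_eq_alternating]
    rw [Equiv.Perm.mem_alternatingGroup]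
    exact Units.val_eq_one.mp ha
  have heven : ∀ x : G n, x ∈ Subgroup.closure { σ : G n | Equiv.Perm.IsThreeCycle σ } →
      ε x = 1 := by
    intro x hx
    rw [Equiv.Perm.closure_three_cycles_eq_alternating] at hx
    rw [Equiv.Perm.mem_alternatingGroup] at hx
    simp [ε, hx]
  clear ha
  induction hmem using Subgroup.closure_induction with
  | mem σ hσ =>
      have hconj : IsConj (cyc h3) σ :=
        Equiv.Perm.isConj_of_cycleType_eq
          (by rw [(cyc_isThreeCycle h3).cycleType, hσ.cycleType])
      obtain ⟨g, hg⟩ := isConj_iff.mp hconj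
      refine ⟨ε g, ?_⟩
      have := psi_conj_mem f hc g (cyc h3) (ε_cyc h3)
      rwa [hg] at this
  | one =>
      refine ⟨0, ?_⟩
      simpa using psi_one_mem f hc
  | mul x y hx hy ihx ihy =>
      obtain ⟨jx, hjx⟩ := ihx
      obtain ⟨jy, hjy⟩ := ihy
      refine ⟨jx + jy, ?_⟩
      have hxe := heven x hx
      have hsum := S.add_mem (S.add_mem (psi_even_mul_mem f hc x y hxe) hjx) hjy
      have key : ψ f (x * y) - (ψ f x + ψ f y) + (ψ f x - (jx : ℚ) * ψ f (cyc h3))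
          + (ψ f y - (jy : ℚ) * ψ f (cyc h3))
          = ψ f (x * y) - ((jx + jy : ℤ) : ℚ) * ψ f (cyc h3) := by push_cast; ring
      rwa [key] at hsum
  | inv x hx ihx =>
      obtain ⟨jx, hjx⟩ := ihx
      refine ⟨-jx, ?_⟩
      have hxe := heven x hx
      have hinv := psi_inv_mem f hc x
      rw [hxe] at hinv
      have hsum := S.sub_mem hinv hjx
      have key : ψ f x⁻¹ + (1 : ℤ) * ψ f x - (ψ f x - (jx : ℚ) * ψ f (cyc h3))
          = ψ f x⁻¹ - ((-jx : ℤ) : ℚ) * ψ f (cyc h3) := by push_cast; ring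
      rwa [key] at hsum

end threecycle

section coboundary

/-- the transposition (0 1) -/
def tau (h2 : 2 ≤ n) : G n := Equiv.swap ⟨0, by omega⟩ ⟨1, by omega⟩

variable (h2 : 2 ≤ n) (f : G n × G n → ℤ)
  (hc : ∀ g h j : G n, ε g * f (h, j) - f (g * h, j) + f (g, h * j) - f (g, h) = 0)

lemma ε_tau : ε (tau h2) = -1 := by
  have : Equiv.Perm.sign (tau h2) = -1 := Equiv.Perm.sign_swap (by simp)
  simp [ε, this]

include h2 hc

lemma psi_odd_mem (g : G n) (hg : ε g = -1) (hψ : ∀ a : G n, ε a = 1 → ψ f a ∈ S) :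
    ψ f g - ψ f (tau h2) ∈ S := by
  set τ := tau h2 with hτ
  have hττ : τ * τ = 1 := by rw [hτ]; exact Equiv.swap_mul_self _ _
  have h1 := psi_mul_mem f hc (g * τ) τ
  have hgτ : g * τ * τ = g := by rw [mul_assoc, hττ, mul_one]
  rw [hgτ] at h1
  have hev : ε (g * τ) = 1 := by rw [ε_mul, hg, ε_tau h2]; ring
  have h2' : ψ f (g * τ) ∈ S := hψ _ hev
  rw [hev] at h1
  have hsum := S.add_mem h1 h2'
  have key : ψ f g - ((1 : ℤ) * ψ f τ + ψ f (g * τ)) + ψ f (g * τ)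
      = ψ f g - ψ f τ := by push_cast; ring
  rwa [key] at hsum

lemma exists_chi (hψ : ∀ a : G n, ε a = 1 → ψ f a ∈ S) :
    ∃ χ : G n → ℤ, ∀ g h : G n, ε g * χ h - χ (g * h) + χ g = f (g, h) := by
  have hmem : ∀ g : G n, ψ f g - (1 - (ε g : ℚ)) / 2 * ψ f (tau h2) ∈ S := by
    intro g
    rcases ε_cases g with hg | hg
    · have heq : ψ f g - (1 - (ε g : ℚ)) / 2 * ψ f (tau h2) = ψ f g := by
        rw [hg]; push_cast; ring
      rw [heq]; exact hψ g hg
    · have heq : ψ f g - (1 - (ε g : ℚ)) / 2 * ψ f (tau h2) = ψ f g - ψ f (tau h2) := by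
        rw [hg]; push_cast; ring
      rw [heq]; exact psi_odd_mem h2 f hc g hg hψ
  choose χ hχ using fun g => (mem_S_iff _).mp (hmem g)
  refine ⟨χ, fun g h => ?_⟩
  have key : ((ε g * χ h - χ (g * h) + χ g : ℤ) : ℚ) = ((f (g, h) : ℤ) : ℚ) := by
    push_cast
    rw [hχ g, hχ h, hχ (g * h)]
    have hm' : ((ε (g * h) : ℤ) : ℚ) = (ε g : ℚ) * (ε h : ℚ) := by
      exact_mod_cast congrArg (Int.cast : ℤ → ℚ) (ε_mul g h)
    have hr := psirel f hc g h
    linear_combination (-1 : ℚ) * hr - (ψ f (tau h2) / 2) * hm'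
  exact_mod_cast key

end coboundary

section bridge

open groupCohomology

variable {n : ℕ}

noncomputable abbrev An (n : ℕ) : Rep ℤ (G n) := Rep.of (signRep n)

/-- the 2-cocycles, as a submodule -/
abbrev twoCocycles (A : Rep ℤ (G n)) := cocycles₂ A

/-- the 2-coboundaries, as a submodule of the 2-cocycles -/
def twoCoboundaries (A : Rep ℤ (G n)) : Submodule ℤ (twoCocycles A) where
  carrier := {f | ⇑f ∈ coboundaries₂ A}
  add_mem' ha hb := (coboundaries₂ A).add_mem ha hb
  zero_mem' := (coboundaries₂ A).zero_mem
  smul_mem' c _ hx := (coboundaries₂ A).toAddSubgroup.zsmul_mem hx c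

/-- identity conversion from the representation's carrier to `ℤ` -/
def toI (x : (An n)) : ℤ := x

/-- underlying integer-valued function of a cochain -/
noncomputable def fI (f : twoCocycles (An n)) : G n × G n → ℤ := fun p => toI (f p)

lemma hc_of_cocycle (f : twoCocycles (An n)) :
    ∀ g h j : G n, ε g * fI f (h, j) - fI f (g * h, j) + fI f (g, h * j) - fI f (g, h) = 0 := by
  intro g h j
  have := (mem_cocycles₂_def (A := An n) f).1 f.2 g h j
  rw [rho_apply] at this
  exact this

lemma mem_coboundaries_of_chi (f : twoCocycles (An n)) (χ : G n → ℤ)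
    (hχ : ∀ g h : G n, ε g * χ h - χ (g * h) + χ g = fI f (g, h)) :
    f ∈ twoCoboundaries (An n) := by
  refine ⟨χ, ?_⟩
  funext p
  rw [d₁₂_hom_apply, rho_apply]
  exact hχ p.1 p.2

/-- a cocycle whose ψ is integral on even permutations is a coboundary -/
lemma mem_coboundaries_of_psi_int (h2 : 2 ≤ n) (f : twoCocycles (An n))
    (hψ : ∀ a : G n, ε a = 1 → ψ (fI f) a ∈ S) :
    f ∈ twoCoboundaries (An n) := by
  obtain ⟨χ, hχ⟩ := exists_chi h2 (fI f) (hc_of_cocycle f) hψ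
  exact mem_coboundaries_of_chi f χ hχ

end bridge

section nu

open groupCohomology

variable {n : ℕ}

lemma fI_add (f g : twoCocycles (An n)) (p : G n × G n) :
    fI (f + g) p = fI f p + fI g p := rfl

lemma fI_smul (z : ℤ) (f : twoCocycles (An n)) (p : G n × G n) :
    fI (z • f) p = z * fI f p := rfl

/-- the invariant of a 2-cocycle in `ZMod 3` -/
noncomputable def νl (h3 : 3 ≤ n) : twoCocycles (An n) →ₗ[ℤ] ZMod 3 where
  toFun f := ((fI f (1, 1) + fI f (cyc h3, cyc h3) + fI f (cyc h3 * cyc h3, cyc h3) : ℤ) : ZMod 3)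
  map_add' f g := by
    simp only [fI_add]
    push_cast
    ring
  map_smul' z f := by
    simp only [fI_smul]
    push_cast
    simp only [RingHom.id_apply, zsmul_eq_mul, id_eq]
    ring

lemma νl_eq_zero_of_coboundary (h3 : 3 ≤ n) (f : twoCocycles (An n))
    (hf : f ∈ twoCoboundaries (An n)) : νl h3 f = 0 := by
  obtain ⟨χ₀, hχ⟩ := hf
  set χ : G n → ℤ := fun g => toI (χ₀ g) with hχdef
  have hval : ∀ g h : G n, fI f (g, h) = ε g * χ h - χ (g * h) + χ g := by
    intro g h
    have h0 : fI f (g, h) = toI ((d₁₂ (An n)).hom χ₀ (g, h)) :=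
      congrArg (fun F : G n × G n → An n => toI (F (g, h))) hχ.symm
    rw [h0]
    show toI (((An n).ρ g) (χ₀ h) - χ₀ (g * h) + χ₀ g) = _
    have h1 : toI (((An n).ρ g) (χ₀ h) - χ₀ (g * h) + χ₀ g)
        = toI (((An n).ρ g) (χ₀ h)) - toI (χ₀ (g * h)) + toI (χ₀ g) := rfl
    rw [h1, rho_apply]
    rfl
  set c := cyc h3 with hc
  have h1 : fI f (1, 1) = χ 1 := by
    rw [hval, ε_one, one_mul, one_mul]; ring
  have h2 : fI f (c, c) = 2 * χ c - χ (c * c) := by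
    rw [hval, ε_cyc h3]; ring
  have h3' : fI f (c * c, c) = χ c - χ 1 + χ (c * c) := by
    rw [hval]
    have he2 : ε (c * c) = 1 := by rw [ε_mul, ε_cyc h3]; ring
    rw [he2, cyc_cube h3]; ring
  show ((fI f (1, 1) + fI f (c, c) + fI f (c * c, c) : ℤ) : ZMod 3) = 0
  rw [h1, h2, h3']
  have : χ 1 + (2 * χ c - χ (c * c)) + (χ c - χ 1 + χ (c * c)) = 3 * χ c := by ring
  rw [this]
  push_cast
  rw [show (3 : ZMod 3) = 0 by decide, zero_mul]

lemma coboundary_of_νl_eq_zero (h3 : 3 ≤ n) (f : twoCocycles (An n))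
    (hν : νl h3 f = 0) : f ∈ twoCoboundaries (An n) := by
  have h2 : 2 ≤ n := le_trans (by norm_num) h3
  set c := cyc h3 with hcd
  have hm : ((fI f (1, 1) + fI f (c, c) + fI f (c * c, c) : ℤ) : ZMod 3) = 0 := hν
  rw [ZMod.intCast_zmod_eq_zero_iff_dvd] at hm
  obtain ⟨k, hk⟩ := hm
  have htp := three_psi_cyc h3 (fI f) (hc_of_cocycle f)
  have hψc : ψ (fI f) c ∈ S := by
    rw [mem_S_iff]
    refine ⟨k, ?_⟩
    have : (((fI f (1, 1) + fI f (c, c) + fI f (c * c, c) : ℤ)) : ℚ) = ((3 * k : ℤ) : ℚ) := by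
      exact_mod_cast congrArg (Int.cast : ℤ → ℚ) hk
    push_cast at this htp
    linarith
  apply mem_coboundaries_of_psi_int h2 f
  intro a ha
  obtain ⟨j, hj⟩ := psi_even_multiple h3 (fI f) (hc_of_cocycle f) a ha
  have hj2 : (j : ℚ) * ψ (fI f) c ∈ S := int_mul_mem_S j hψc
  have := S.add_mem hj hj2
  simpa [hcd] using this

end nu

section five

open groupCohomology

variable {n : ℕ}

lemma tau_conj_cyc (h3 : 3 ≤ n) :
    tau (le_trans (by norm_num) h3) * cyc h3 * (tau (le_trans (by norm_num) h3))⁻¹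
      = (cyc h3)⁻¹ := by
  unfold tau cyc
  rw [Equiv.swap_inv, mul_inv_rev, Equiv.swap_inv, Equiv.swap_inv,
    Equiv.swap_comm (⟨0, by omega⟩ : Fin n) ⟨1, by omega⟩]
  simp only [mul_assoc, Equiv.swap_mul_self_mul]

lemma cyc_disjoint_swap34 (h5 : 5 ≤ n) :
    Equiv.Perm.Disjoint (cyc (by omega : 3 ≤ n)) (Equiv.swap ⟨3, by omega⟩ ⟨4, by omega⟩) := by
  intro x
  by_cases hx : x = (⟨3, by omega⟩ : Fin n) ∨ x = (⟨4, by omega⟩ : Fin n)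
  · left
    unfold cyc
    rcases hx with hx | hx <;> subst hx <;>
    · rw [Equiv.Perm.mul_apply, Equiv.swap_apply_of_ne_of_ne, Equiv.swap_apply_of_ne_of_ne] <;>
        simp [Equiv.swap_apply_of_ne_of_ne, Fin.ext_iff]
  · right
    push_neg at hx
    exact Equiv.swap_apply_of_ne_of_ne hx.1 hx.2

lemma conj_cyc_five (h5 : 5 ≤ n) :
    ∃ g : G n, ε g = 1 ∧ g * cyc (by omega : 3 ≤ n) * g⁻¹ = (cyc (by omega : 3 ≤ n))⁻¹ := by
  set τ := tau (le_trans (by norm_num) (by omega : 3 ≤ n)) with hτ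
  set u : G n := Equiv.swap ⟨3, by omega⟩ ⟨4, by omega⟩ with hu
  refine ⟨u * τ, ?_, ?_⟩
  · rw [ε_mul]
    have h1 : ε u = -1 := by
      have : Equiv.Perm.sign u = -1 := Equiv.Perm.sign_swap (by simp [Fin.ext_iff])
      simp [ε, this]
    have h2 : ε τ = -1 := ε_tau _
    rw [h1, h2]; ring
  · have hcomm : Commute (cyc (by omega : 3 ≤ n)) u := (cyc_disjoint_swap34 h5).commute
    have key : (u * τ) * cyc (by omega : 3 ≤ n) * (u * τ)⁻¹
        = u * (τ * cyc (by omega : 3 ≤ n) * τ⁻¹) * u⁻¹ := by group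
    rw [key, hτ, tau_conj_cyc (by omega : 3 ≤ n)]
    have hc' := (hcomm.inv_left).eq
    rw [← hc', mul_assoc, mul_inv_cancel, mul_one]

lemma all_coboundary_five (h5 : 5 ≤ n) (f : twoCocycles (An n)) :
    f ∈ twoCoboundaries (An n) := by
  have h3 : 3 ≤ n := by omega
  have h2 : 2 ≤ n := by omega
  set c := cyc h3 with hcd
  have hc := hc_of_cocycle f
  -- ψ c is integral
  obtain ⟨g, hg1, hg2⟩ := conj_cyc_five h5
  have h1 := psi_conj_mem (fI f) hc g c (ε_cyc h3)
  rw [hg2, hg1] at h1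
  have hinv := psi_inv_mem (fI f) hc c
  rw [ε_cyc h3] at hinv
  have h2S : 2 * ψ (fI f) c ∈ S := by
    have := S.sub_mem hinv h1
    have key : ψ (fI f) c⁻¹ + (1 : ℤ) * ψ (fI f) c - (ψ (fI f) c⁻¹ - (1 : ℤ) * ψ (fI f) c)
        = 2 * ψ (fI f) c := by push_cast; ring
    rwa [key] at this
  have h3S : 3 * ψ (fI f) c ∈ S := by
    rw [three_psi_cyc h3 (fI f) hc]
    rw [mem_S_iff]
    exact ⟨fI f (1, 1) + fI f (cyc h3, cyc h3) + fI f (cyc h3 * cyc h3, cyc h3),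
      by push_cast; ring⟩
  have hψc : ψ (fI f) c ∈ S := by
    have := S.sub_mem h3S h2S
    have key : 3 * ψ (fI f) c - 2 * ψ (fI f) c = ψ (fI f) c := by ring
    rwa [key] at this
  apply mem_coboundaries_of_psi_int h2 f
  intro a ha
  obtain ⟨j, hj⟩ := psi_even_multiple h3 (fI f) hc a ha
  have hj2 : (j : ℚ) * ψ (fI f) c ∈ S := int_mul_mem_S j hψc
  have := S.add_mem hj hj2
  simpa [hcd] using this

lemma all_coboundary_two (f : twoCocycles (An 2)) :
    f ∈ twoCoboundaries (An 2) := by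
  apply mem_coboundaries_of_psi_int (le_refl 2) f
  intro a ha
  have h1 : a = 1 := by
    revert ha
    revert a
    decide
  rw [h1]
  exact psi_one_mem (fI f) (hc_of_cocycle f)

lemma subsingleton_H2_of_all (hall : ∀ f : twoCocycles (An n), f ∈ twoCoboundaries (An n)) :
    Subsingleton (groupCohomology.H2 (An n)) := by
  refine ⟨fun x y => ?_⟩
  have h0 : ∀ z : groupCohomology.H2 (An n), z = 0 := fun z =>
    groupCohomology.H2_induction_on z fun c => (H2π_eq_zero_iff c).2 (hall c)
  rw [h0 x, h0 y]

end five

section construct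

open groupCohomology

variable {n : ℕ}

/-- integral 2-cocycle obtained from a mod-3 twisted homomorphism -/
def fk (k : G n → ℤ) : G n × G n → ℤ :=
  fun p => (k p.1 + ε p.1 * k p.2 - k (p.1 * p.2)) / 3

lemma fk_mul (k : G n → ℤ) (hdvd : ∀ g h : G n, (3 : ℤ) ∣ (k g + ε g * k h - k (g * h)))
    (g h : G n) : 3 * fk k (g, h) = k g + ε g * k h - k (g * h) :=
  Int.mul_ediv_cancel' (hdvd g h)

lemma fk_hc (k : G n → ℤ) (hdvd : ∀ g h : G n, (3 : ℤ) ∣ (k g + ε g * k h - k (g * h))) :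
    ∀ g h j : G n, ε g * fk k (h, j) - fk k (g * h, j) + fk k (g, h * j) - fk k (g, h) = 0 := by
  intro g h j
  apply mul_left_cancel₀ (show (3 : ℤ) ≠ 0 by norm_num)
  have e1 := fk_mul k hdvd h j
  have e2 := fk_mul k hdvd (g * h) j
  have e3 := fk_mul k hdvd g (h * j)
  have e4 := fk_mul k hdvd g h
  rw [mul_assoc g h j, ε_mul] at e2
  linear_combination (ε g : ℤ) * e1 - e2 + e3 - e4

lemma fk_mem (k : G n → ℤ) (hdvd : ∀ g h : G n, (3 : ℤ) ∣ (k g + ε g * k h - k (g * h))) :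
    fk k ∈ twoCocycles (An n) := by
  rw [mem_cocycles₂_def]
  intro g h j
  rw [rho_apply]
  exact fk_hc k hdvd g h j

lemma fk_nu (h3 : 3 ≤ n) (k : G n → ℤ)
    (hdvd : ∀ g h : G n, (3 : ℤ) ∣ (k g + ε g * k h - k (g * h))) :
    νl h3 ⟨fk k, fk_mem k hdvd⟩ = ((k (cyc h3) : ℤ) : ZMod 3) := by
  have hsum : fk k (1, 1) + fk k (cyc h3, cyc h3) + fk k (cyc h3 * cyc h3, cyc h3)
      = k (cyc h3) := by
    apply mul_left_cancel₀ (show (3 : ℤ) ≠ 0 by norm_num)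
    have e1 := fk_mul k hdvd 1 1
    have e2 := fk_mul k hdvd (cyc h3) (cyc h3)
    have e3 := fk_mul k hdvd (cyc h3 * cyc h3) (cyc h3)
    rw [one_mul, ε_one] at e1
    rw [ε_cyc h3] at e2
    have he2 : ε (cyc h3 * cyc h3) = 1 := by rw [ε_mul, ε_cyc h3]; ring
    rw [he2, cyc_cube h3] at e3
    linear_combination e1 + e2 + e3
  show ((fI ⟨fk k, fk_mem k hdvd⟩ (1, 1) + fI ⟨fk k, fk_mem k hdvd⟩ (cyc h3, cyc h3)
      + fI ⟨fk k, fk_mem k hdvd⟩ (cyc h3 * cyc h3, cyc h3) : ℤ) : ZMod 3) = _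
  have hfi : ∀ p, fI (⟨fk k, fk_mem k hdvd⟩ : twoCocycles (An n)) p = fk k p := fun _ => rfl
  rw [hfi, hfi, hfi, hsum]

end construct

section assemble

open groupCohomology

variable {n : ℕ}

/-- convert a `ModuleCat ℤ` isomorphism to an additive equivalence -/
noncomputable def isoToAddEquiv {X Y : ModuleCat ℤ} (i : X ≅ Y) : X ≃+ Y where
  toFun := i.hom.hom
  invFun := i.inv.hom
  left_inv x := by simp
  right_inv x := by simp
  map_add' := map_add i.hom.hom

lemma nonempty_H2_addEquiv (h3 : 3 ≤ n) (k : G n → ℤ)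
    (hdvd : ∀ g h : G n, (3 : ℤ) ∣ (k g + ε g * k h - k (g * h)))
    (hnz : ((k (cyc h3) : ℤ) : ZMod 3) ≠ 0) :
    Nonempty ((groupCohomology.H2 (An n)) ≃+ ZMod 3) := by
  have hle : twoCoboundaries (An n) ≤ LinearMap.ker (νl h3) := by
    intro f hf
    exact LinearMap.mem_ker.mpr (νl_eq_zero_of_coboundary h3 f hf)
  let φ : twoCocycles (An n) →+ H2 (An n) := (H2π (An n)).hom.toAddMonoidHom
  have hsπ : Function.Surjective φ :=
    (ModuleCat.epi_iff_surjective (H2π (An n))).mp inferInstance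
  have hker : (twoCoboundaries (An n)).toAddSubgroup = φ.ker := by
    ext x; exact (H2π_eq_zero_iff x).symm
  let eq : (twoCocycles (An n) ⧸ twoCoboundaries (An n)) ≃+ H2 (An n) :=
    (QuotientAddGroup.quotientAddEquivOfEq hker).trans
      (QuotientAddGroup.quotientKerEquivOfSurjective φ hsπ)
  set νbar : (twoCocycles (An n) ⧸ twoCoboundaries (An n)) →ₗ[ℤ] ZMod 3 :=
    Submodule.liftQ _ (νl h3) hle with hνbar
  have hinj : Function.Injective νbar := by
    rw [← LinearMap.ker_eq_bot]
    apply Submodule.ker_liftQ_eq_bot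
    intro f hf
    exact coboundary_of_νl_eq_zero h3 f (LinearMap.mem_ker.mp hf)
  have hsurj : Function.Surjective νbar := by
    intro y
    have hx : νbar (Submodule.Quotient.mk ⟨fk k, fk_mem k hdvd⟩)
        = ((k (cyc h3) : ℤ) : ZMod 3) := by
      rw [hνbar, Submodule.liftQ_apply]
      exact fk_nu h3 k hdvd
    have hex : ∀ x y : ZMod 3, x ≠ 0 → ∃ z : ZMod 3, z * x = y := by decide
    obtain ⟨z, hz⟩ := hex _ y hnz
    refine ⟨((z.val : ℤ)) • Submodule.Quotient.mk ⟨fk k, fk_mem k hdvd⟩, ?_⟩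
    rw [map_smul, hx]
    rw [zsmul_eq_mul]
    push_cast
    rw [ZMod.natCast_rightInverse z]
    exact hz
  exact ⟨eq.symm.trans (LinearEquiv.ofBijective νbar ⟨hinj, hsurj⟩).toAddEquiv⟩

lemma h33 : (3 : ℕ) ≤ 3 := le_refl 3
lemma h34 : (3 : ℕ) ≤ 4 := by norm_num

/-- twisted homomorphism for `n = 3` -/
def k3 : G 3 → ℤ := fun g => ((g 0).val : ℤ)

/-- twisted homomorphism for `n = 4` -/
def k4 : G 4 → ℤ := fun g => (((g 0).val ^^^ (g 1).val : ℕ) : ℤ) - 1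

lemma k3_dvd : ∀ g h : G 3, (3 : ℤ) ∣ (k3 g + ε g * k3 h - k3 (g * h)) := by decide

lemma k4_dvd : ∀ g h : G 4, (3 : ℤ) ∣ (k4 g + ε g * k4 h - k4 (g * h)) := by decide

lemma k3_nz : ((k3 (cyc h33) : ℤ) : ZMod 3) ≠ 0 := by decide

lemma k4_nz : ((k4 (cyc h34) : ℤ) : ZMod 3) ≠ 0 := by decide

end assemble

end SignH2

open SignH2 groupCohomology

/-- For `n ≥ 2`, `H^2(Σ_n, ℤ_sgn)` is trivial except when `n ∈ {3, 4}`, in which case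
it is cyclic of order `3`. -/
theorem H2_signRep (n : ℕ) (hn : 2 ≤ n) :
    (n = 3 ∨ n = 4 →
      Nonempty ((groupCohomology (Rep.of (signRep n)) 2) ≃+ ZMod 3)) ∧
    (n ≠ 3 → n ≠ 4 → Subsingleton (groupCohomology (Rep.of (signRep n)) 2)) := by
  constructor
  · rintro (rfl | rfl)
    · obtain ⟨e⟩ := nonempty_H2_addEquiv h33 k3 k3_dvd k3_nz
      exact ⟨e⟩
    · obtain ⟨e⟩ := nonempty_H2_addEquiv h34 k4 k4_dvd k4_nz
      exact ⟨e⟩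
  · intro h3 h4
    have hcase : n = 2 ∨ 5 ≤ n := by omega
    have hall : ∀ f : twoCocycles (An n), f ∈ twoCoboundaries (An n) := by
      rcases hcase with rfl | h5
      · exact all_coboundary_two
      · exact fun f => all_coboundary_five h5 f
    exact subsingleton_H2_of_all hall
end
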